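/- Let β₁₁(v) = (1/(3v²))·M(v)/A(v), where M(v) = 45360v² cos v + 16998v⁴ − 850v⁶ + 37v⁶ cos v − 90720 + 90720 cos v + 1902v⁴ cos v and A(v) = 15120 cos v − 15120 + 6900v² − 313v⁴ + 660v² cos v + 13v⁴ cos v. Then lim_{v→0} β₁₁(v) = 3665/3894. -/

import Mathlib

open Filter Finset

noncomputable def Pt (v : ℝ) : ℝ :=
  1 - v^2/2 + v^4/24 - v^6/720 + v^8/40320 - v^10/3628800 + v^12/479001600

lemma sum_half (v : ℝ) :
    ((∑ m ∈ range 14, ((v:ℂ)*Complex.I) ^ m / m.factorial)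
      + ∑ m ∈ range 14, (-((v:ℂ)*Complex.I)) ^ m / m.factorial) / 2 = (Pt v : ℂ) := by
  have h2 := Complex.I_sq
  have h4 : Complex.I^4 = 1 := by rw [show (4:ℕ) = 2*2 from rfl, pow_mul, h2]; norm_num
  have h6 : Complex.I^6 = -1 := by rw [show (6:ℕ) = 2*3 from rfl, pow_mul, h2]; norm_num
  have h8 : Complex.I^8 = 1 := by rw [show (8:ℕ) = 2*4 from rfl, pow_mul, h2]; norm_num
  have h10 : Complex.I^10 = -1 := by rw [show (10:ℕ) = 2*5 from rfl, pow_mul, h2]; norm_num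
  have h12 : Complex.I^12 = 1 := by rw [show (12:ℕ) = 2*6 from rfl, pow_mul, h2]; norm_num
  simp [Finset.sum_range_succ, Nat.factorial, Pt]
  ring_nf
  rw [h2, h4, h6, h8, h10, h12]
  norm_num

lemma cos_taylor_bound {v : ℝ} (hv : |v| ≤ 1) : |Real.cos v - Pt v| ≤ |v|^14 := by
  have h1 : ‖(v:ℂ)*Complex.I‖ ≤ 1 := by
    simpa [Complex.norm_real] using hv
  have h2 : ‖-((v:ℂ)*Complex.I)‖ ≤ 1 := by
    simpa [Complex.norm_real] using hv
  have b1 := Complex.exp_bound h1 (n := 14) (by norm_num)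
  have b2 := Complex.exp_bound h2 (n := 14) (by norm_num)
  have key : ((Real.cos v : ℂ) - (Pt v : ℂ)) =
      ((Complex.exp ((v:ℂ)*Complex.I) - ∑ m ∈ range 14, ((v:ℂ)*Complex.I) ^ m / m.factorial)
        + (Complex.exp (-((v:ℂ)*Complex.I)) - ∑ m ∈ range 14, (-((v:ℂ)*Complex.I)) ^ m / m.factorial)) / 2 := by
    rw [Complex.ofReal_cos, Complex.cos, ← sum_half v]
    field_simp
    ring
  have habs : |Real.cos v - Pt v| = ‖(Real.cos v : ℂ) - (Pt v : ℂ)‖ := by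
    rw [← Complex.ofReal_sub, Complex.norm_real, Real.norm_eq_abs]
  rw [habs, key]
  have hA : ‖(v:ℂ)*Complex.I‖ = |v| := by simp [Complex.norm_real]
  have hA2 : ‖-((v:ℂ)*Complex.I)‖ = |v| := by simp [Complex.norm_real]
  rw [hA] at b1; rw [hA2] at b2
  calc ‖(_ / 2 : ℂ)‖ ≤ (|v|^14 * ((15:ℝ) * ((Nat.factorial 14 * 14 : ℝ))⁻¹)
        + |v|^14 * ((15:ℝ) * ((Nat.factorial 14 * 14 : ℝ))⁻¹)) / 2 := by
        rw [norm_div]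
        simp only [Complex.norm_two]
        gcongr
        exact (norm_add_le _ _).trans (by push_cast at b1 b2 ⊢; linarith)
    _ ≤ |v|^14 := by
        have hf : ((Nat.factorial 14 : ℕ) : ℝ) = 87178291200 := by norm_num [Nat.factorial]
        rw [hf]
        nlinarith [pow_nonneg (abs_nonneg v) 14]

noncomputable def Ef (v : ℝ) : ℝ := (Real.cos v - Pt v) / v^12

lemma Ef_tendsto : Tendsto Ef (nhdsWithin 0 {0}ᶜ) (nhds 0) := by
  have hb : ∀ᶠ v in nhdsWithin (0:ℝ) {0}ᶜ, ‖Ef v‖ ≤ v^2 := by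
    filter_upwards [self_mem_nhdsWithin,
      nhdsWithin_le_nhds (eventually_abs_sub_lt (0:ℝ) (zero_lt_one))] with v hv h1
    have hv0 : v ≠ 0 := hv
    rw [sub_zero] at h1
    have hb := cos_taylor_bound h1.le
    have hv12 : (0:ℝ) < |v|^12 := pow_pos (abs_pos.mpr hv0) 12
    rw [Ef, Real.norm_eq_abs, abs_div, abs_pow, div_le_iff₀ hv12]
    calc |Real.cos v - Pt v| ≤ |v|^14 := hb
      _ = v^2 * |v|^12 := by rw [← sq_abs v]; ring
  have h2 : Tendsto (fun v : ℝ => v^2) (nhdsWithin 0 {0}ᶜ) (nhds 0) := by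
    have := ((continuous_pow 2).tendsto (0:ℝ)).mono_left
      (nhdsWithin_le_nhds (s := {0}ᶜ))
    simpa using this
  exact squeeze_zero_norm' hb h2

/-- The PL′ coefficient `β₁₁(v)` tends to the classical value `3665/3894`
as the fitting frequency parameter `v → 0`. -/
theorem beta11_limit :
    Tendsto (fun v : ℝ =>
      (1/(3*v^2)) *
        ((45360*v^2*Real.cos v + 16998*v^4 - 850*v^6 + 37*v^6*Real.cos v
            - 90720 + 90720*Real.cos v + 1902*v^4*Real.cos v) /
          (15120*Real.cos v - 15120 + 6900*v^2 - 313*v^4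
            + 660*v^2*Real.cos v + 13*v^4*Real.cos v)))
      (nhdsWithin 0 {0}ᶜ) (nhds (3665/3894)) := by
  set np : ℝ → ℝ := fun v => -733/44352 + 29/59400*v^2 - 71/11404800*v^4 + 37/479001600*v^6 with hnp
  set ap : ℝ → ℝ := fun v => -59/10080 + 229/1330560*v^2 - 1/453600*v^4 + 13/479001600*v^6 with hap
  set cp : ℝ → ℝ := fun v => 90720 + 45360*v^2 + 1902*v^4 + 37*v^6 with hcp
  set dp : ℝ → ℝ := fun v => 15120 + 660*v^2 + 13*v^4 with hdp
  have hid : Tendsto (fun v : ℝ => v) (nhdsWithin 0 {0}ᶜ) (nhds 0) :=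
    tendsto_id.mono_left nhdsWithin_le_nhds
  have hE := Ef_tendsto
  -- limit of numerator and denominator parts
  have hnum : Tendsto (fun v => np v + cp v * Ef v) (nhdsWithin 0 {0}ᶜ)
      (nhds (-733/44352)) := by
    have h1 : Tendsto np (nhdsWithin 0 {0}ᶜ) (nhds (np 0)) :=
      ((Continuous.tendsto (by continuity) 0)).mono_left nhdsWithin_le_nhds
    have h2 : Tendsto cp (nhdsWithin 0 {0}ᶜ) (nhds (cp 0)) :=
      ((Continuous.tendsto (by continuity) 0)).mono_left nhdsWithin_le_nhds
    have := h1.add (h2.mul hE)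
    simpa [hnp, hcp] using this
  have hden : Tendsto (fun v => 3*(ap v + v^2 * dp v * Ef v)) (nhdsWithin 0 {0}ᶜ)
      (nhds (3*(-59/10080))) := by
    have h1 : Tendsto ap (nhdsWithin 0 {0}ᶜ) (nhds (ap 0)) :=
      ((Continuous.tendsto (by continuity) 0)).mono_left nhdsWithin_le_nhds
    have h2 : Tendsto (fun v => v^2 * dp v) (nhdsWithin 0 {0}ᶜ) (nhds (0^2 * dp 0)) :=
      ((Continuous.tendsto (by continuity) 0)).mono_left nhdsWithin_le_nhds
    have := (h1.add ((h2.mul hE))).const_mul (3:ℝ)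
    simpa [hap, hdp] using this
  have hmain : Tendsto (fun v => (np v + cp v * Ef v) / (3*(ap v + v^2 * dp v * Ef v)))
      (nhdsWithin 0 {0}ᶜ) (nhds (3665/3894)) := by
    have := hnum.div hden (by norm_num)
    convert this using 2
    norm_num
    norm_num
  refine hmain.congr' ?_
  filter_upwards [self_mem_nhdsWithin,
    hden.eventually_ne (by norm_num : (3*((-59:ℝ)/10080)) ≠ 0)] with v hv hY
  have hv0 : v ≠ 0 := hv
  have hcos : Real.cos v = Pt v + v^12 * Ef v := by
    rw [Ef, mul_div_cancel₀ _ (pow_ne_zero 12 hv0)]; ring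
  have hY' : ap v + v^2 * dp v * Ef v ≠ 0 := fun h => hY (by rw [h]; ring)
  have hM : (45360*v^2*Real.cos v + 16998*v^4 - 850*v^6 + 37*v^6*Real.cos v
      - 90720 + 90720*Real.cos v + 1902*v^4*Real.cos v)
      = v^12 * (np v + cp v * Ef v) := by
    rw [hcos]; simp only [hnp, hcp, Pt]; ring
  have hA : (15120*Real.cos v - 15120 + 6900*v^2 - 313*v^4
      + 660*v^2*Real.cos v + 13*v^4*Real.cos v)
      = v^10 * (ap v + v^2 * dp v * Ef v) := by
    rw [hcos]; simp only [hap, hdp, Pt]; ring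
  rw [hM, hA]
  field_simp
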